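/- Suppose families of complex numbers s_i^{(m)}, e_i^{(m)} and functions ρ₁, ρ₂, θ₁, θ₂ : ℤ → ℂ satisfy: (1) i·s_i^{(m)} = -(n - m + i)·e_{n-m+i}^{(n)} for all m, n, i ∈ ℤ with i ≠ 0 and i ≠ m - n; (2) ρ₁(m) + n·ρ₂(m) = -(n - m)·e_{n-m}^{(n)} for all m, n ∈ ℤ; (3) θ₁(n) + m·θ₂(n) = (m - n)·s_{m-n}^{(m)} for all m, n ∈ ℤ. Then there exists μ : ℤ → ℂ such that for all m ∈ ℤ and k ∈ ℤ with k ≠ -m: s_{m+k}^{(m)} = -e_{m+k}^{(m)} = μ(k)/(m + k), and moreover ρ₁(m) = θ₁(m) = μ(-m) and ρ₂(m) = θ₂(m) = 0 for all m ∈ ℤ. -/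

import Mathlib

theorem stmt2 (s e : ℤ → ℤ → ℂ) (ρ₁ ρ₂ θ₁ θ₂ : ℤ → ℂ)
    (H1 : ∀ m n i : ℤ, i ≠ 0 → i ≠ m - n →
      (i : ℂ) * s i m = -(((n : ℂ) - m + i) * e (n - m + i) n))
    (H2 : ∀ m n : ℤ, ρ₁ m + (n : ℂ) * ρ₂ m = -(((n : ℂ) - m) * e (n - m) n))
    (H3 : ∀ m n : ℤ, θ₁ n + (m : ℂ) * θ₂ n = ((m : ℂ) - n) * s (m - n) m) :
    ∃ μ : ℤ → ℂ,
      (∀ m k : ℤ, k ≠ -m →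
        s (m + k) m = μ k / ((m : ℂ) + k) ∧ e (m + k) m = -(μ k / ((m : ℂ) + k))) ∧
      (∀ m : ℤ, ρ₁ m = μ (-m) ∧ θ₁ m = μ (-m) ∧ ρ₂ m = 0 ∧ θ₂ m = 0) := by
  set μ : ℤ → ℂ := fun k => s 1 (1 - k) with hμdef
  have key : ∀ m k : ℤ, k ≠ -m →
      s (m + k) m = μ k / ((m : ℂ) + k) ∧ e (m + k) m = -(μ k / ((m : ℂ) + k)) := by
    intro m k hk
    have h0 : m + k ≠ 0 := by omega
    have hc0 : ((m : ℂ) + k) ≠ 0 := by exact_mod_cast h0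
    have he1 : e 1 (1 - k) = - s 1 (1 - k) := by
      have h := H1 (1 - k) (1 - k) 1 (by norm_num) (by omega)
      have hidx : (1 - k) - (1 - k) + 1 = (1 : ℤ) := by ring
      rw [hidx] at h
      push_cast at h
      linear_combination h
    have hs : ((m : ℂ) + k) * s (m + k) m = μ k := by
      have h := H1 m (1 - k) (m + k) h0 (by omega)
      have hidx : (1 - k) - m + (m + k) = (1 : ℤ) := by ring
      rw [hidx, he1] at h
      push_cast at h
      rw [hμdef]
      simp only
      linear_combination h
    have he : e (m + k) m = - s (m + k) m := by
      have h := H1 m m (m + k) h0 (by omega)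
      have hidx : m - m + (m + k) = m + k := by ring
      rw [hidx] at h
      push_cast at h
      refine mul_left_cancel₀ hc0 ?_
      linear_combination h
    constructor
    · field_simp
      linear_combination hs
    · rw [he]
      field_simp
      linear_combination -hs
  refine ⟨μ, key, ?_⟩
  intro m
  have hE : ∀ n : ℤ, n ≠ m → ρ₁ m + (n : ℂ) * ρ₂ m = μ (-m) := by
    intro n hn
    have h2 := H2 m n
    have hk := (key n (-m) (by omega)).2
    have hidx : n + -m = n - m := by ring
    rw [hidx] at hk
    rw [hk] at h2
    rw [h2]
    have hcm : ((n : ℂ)) - m ≠ 0 := sub_ne_zero.mpr (by exact_mod_cast hn)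
    push_cast
    rw [show ((n : ℂ) + -m) = (n : ℂ) - m from by ring,
      show -(((n : ℂ) - m) * -(μ (-m) / ((n : ℂ) - m))) = μ (-m) / ((n : ℂ) - m) * ((n : ℂ) - m)
        from by ring, div_mul_cancel₀ _ hcm]
  have hS : ∀ p : ℤ, p ≠ m → θ₁ m + (p : ℂ) * θ₂ m = μ (-m) := by
    intro p hp
    have h3 := H3 p m
    have hk := (key p (-m) (by omega)).1
    have hidx : p + -m = p - m := by ring
    rw [hidx] at hk
    rw [hk] at h3
    rw [h3]
    have hcm : ((p : ℂ)) - m ≠ 0 := sub_ne_zero.mpr (by exact_mod_cast hp)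
    push_cast
    rw [show ((p : ℂ) + -m) = (p : ℂ) - m from by ring,
      show ((p : ℂ) - m) * (μ (-m) / ((p : ℂ) - m)) = μ (-m) / ((p : ℂ) - m) * ((p : ℂ) - m)
        from by ring, div_mul_cancel₀ _ hcm]
  have e1 := hE (m + 1) (by omega)
  have e2 := hE (m + 2) (by omega)
  have s1 := hS (m + 1) (by omega)
  have s2 := hS (m + 2) (by omega)
  push_cast at e1 e2 s1 s2
  refine ⟨?_, ?_, ?_, ?_⟩
  · linear_combination ((m : ℂ) + 2) * e1 - ((m : ℂ) + 1) * e2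
  · linear_combination ((m : ℂ) + 2) * s1 - ((m : ℂ) + 1) * s2
  · linear_combination e2 - e1
  · linear_combination s2 - s1
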